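/- Let n ≥ 1 and 1 ≤ ℓ ≤ n be integers, ε₀ > 0, and a, b ≥ 0 real numbers, and set κ = (e^{ε₀}−1)/(e^{ε₀}+1). Then ln(1 + (ℓ/n)·(e^{ε₀/n}·(1 + κ·(a/√ℓ + b/ℓ)) − 1)) ≤ ε₀/n + ln(1 + κ·(√(ℓ/n)·(a/√n) + b/n)). -/

import Mathlib

/-- the key logarithmic inequality from the proof of Theorem 3. -/
theorem subsampling_log_inequality
    (n ℓ : ℕ) (hn : 1 ≤ n) (hℓ1 : 1 ≤ ℓ) (hℓn : ℓ ≤ n)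
    (ε₀ a b : ℝ) (hε₀ : 0 < ε₀) (ha : 0 ≤ a) (hb : 0 ≤ b)
    (κ : ℝ) (hκ : κ = (Real.exp ε₀ - 1) / (Real.exp ε₀ + 1)) :
    Real.log (1 + ((ℓ : ℝ) / n) *
        (Real.exp (ε₀ / n) * (1 + κ * (a / Real.sqrt ℓ + b / ℓ)) - 1)) ≤
      ε₀ / n + Real.log (1 + κ * (Real.sqrt ((ℓ : ℝ) / n) * (a / Real.sqrt n) + b / n)) := by
  have hn' : (0:ℝ) < n := by exact_mod_cast hn
  have hℓ' : (0:ℝ) < ℓ := by exact_mod_cast hℓ1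
  have hℓn' : (ℓ:ℝ) ≤ n := by exact_mod_cast hℓn
  have hκ0 : 0 ≤ κ := by
    rw [hκ]
    apply div_nonneg
    · linarith [Real.one_le_exp hε₀.le]
    · positivity
  have hsqℓ : (0:ℝ) < Real.sqrt ℓ := Real.sqrt_pos.2 hℓ'
  have hsqn : (0:ℝ) < Real.sqrt n := Real.sqrt_pos.2 hn'
  have hmsℓ : Real.sqrt ℓ * Real.sqrt ℓ = (ℓ:ℝ) := Real.mul_self_sqrt hℓ'.le
  have hmsn : Real.sqrt n * Real.sqrt n = (n:ℝ) := Real.mul_self_sqrt hn'.le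
  set c := ε₀ / n with hc
  have hc0 : 0 ≤ c := by positivity
  have hec : 1 ≤ Real.exp c := Real.one_le_exp hc0
  set T := a / Real.sqrt ℓ + b / ℓ with hT
  have hT0 : 0 ≤ T := by positivity
  set r := (ℓ:ℝ)/n with hr
  have hr1 : r ≤ 1 := by rw [hr]; exact div_le_one_of_le₀ hℓn' hn'.le
  have hr0 : 0 ≤ r := by positivity
  have hS : Real.sqrt ((ℓ:ℝ)/n) * (a / Real.sqrt n) + b / n = r * T := by
    rw [hT, hr, Real.sqrt_div hℓ'.le, div_mul_div_comm, ← hmsn,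
      div_add_div _ _ hsqℓ.ne' hℓ'.ne']
    field_simp
    simp only [Real.sq_sqrt hℓ'.le, Real.sq_sqrt hn'.le]
    linear_combination (a * (n:ℝ)) * hmsℓ
  rw [hS]
  have hX : (0:ℝ) < 1 + κ * (r * T) := by positivity
  have h1 : 1 ≤ Real.exp c * (1 + κ * T) := by nlinarith [mul_nonneg hκ0 hT0]
  have harg : (0:ℝ) < 1 + r * (Real.exp c * (1 + κ * T) - 1) := by
    nlinarith [mul_nonneg hr0 (sub_nonneg.2 h1)]
  have key : 1 + r * (Real.exp c * (1 + κ * T) - 1) ≤ Real.exp c * (1 + κ * (r * T)) := by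
    nlinarith [mul_nonneg (sub_nonneg.2 hec) (sub_nonneg.2 hr1)]
  calc Real.log (1 + r * (Real.exp c * (1 + κ * T) - 1))
      ≤ Real.log (Real.exp c * (1 + κ * (r * T))) := Real.log_le_log harg key
    _ = c + Real.log (1 + κ * (r * T)) := by
        rw [Real.log_mul (Real.exp_ne_zero c) hX.ne', Real.log_exp]
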